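/- Let $X(r,t)=-r+(\cos(2t)+\sin(2t)+2)r^3$ and $r^*(t)=\frac{1}{\sqrt{2+\cos(2t)}}$. Then $\int_0^{2\pi}\frac{\partial X}{\partial r}(r^*(t),t)\,dt=4\pi$; in particular the periodic solution $r^*$ is hyperbolic and unstable. -/

import Mathlib

open Real

/-- ∫₀^{2π} ∂ᵣX(r*(t),t) dt = 4π for X(r,t) = -r + (cos 2t + sin 2t + 2)r³ and
r*(t) = 1/√(2+cos 2t); in particular the integral is nonzero (hyperbolicity) and
positive (instability). -/
theorem integral_along_solution_eq_four_pi :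
    (∫ t in (0:ℝ)..(2*π),
      (-1 + 3 * (Real.cos (2*t) + Real.sin (2*t) + 2) *
        (1 / Real.sqrt (2 + Real.cos (2*t)))^2)) = 4*π ∧
    (0:ℝ) < 4*π := by
  have hpos : ∀ t : ℝ, 0 < 2 + Real.cos (2*t) := by
    intro t; nlinarith [Real.neg_one_le_cos (2*t)]
  constructor
  · have hg : ∀ t : ℝ, HasDerivAt (fun t => 2*t - (3/2)*Real.log (2 + Real.cos (2*t)))
        (-1 + 3 * (Real.cos (2*t) + Real.sin (2*t) + 2) *
          (1 / Real.sqrt (2 + Real.cos (2*t)))^2) t := by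
      intro t
      have h1 : HasDerivAt (fun t : ℝ => 2 + Real.cos (2*t)) (-(Real.sin (2*t)) * 2) t := by
        have := ((Real.hasDerivAt_cos (2*t)).comp t ((hasDerivAt_id t).const_mul 2)).const_add 2
        simpa [mul_comm] using this
      have h2 : HasDerivAt (fun t : ℝ => Real.log (2 + Real.cos (2*t)))
          ((-(Real.sin (2*t)) * 2) / (2 + Real.cos (2*t))) t :=
        h1.log (hpos t).ne'
      have h3 := ((hasDerivAt_id t).const_mul 2).sub (h2.const_mul (3/2))
      refine HasDerivAt.congr_deriv (f := fun t => 2*t - (3/2)*Real.log (2 + Real.cos (2*t))) h3 ?_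
      have hs : Real.sqrt (2 + Real.cos (2*t)) ^ 2 = 2 + Real.cos (2*t) :=
        Real.sq_sqrt (hpos t).le
      have hne : (2 + Real.cos (2*t)) ≠ 0 := (hpos t).ne'
      rw [div_pow, one_pow, hs]
      field_simp
      ring
    have hcont : Continuous (fun t : ℝ =>
        (-1 + 3 * (Real.cos (2*t) + Real.sin (2*t) + 2) *
          (1 / Real.sqrt (2 + Real.cos (2*t)))^2)) := by
      apply Continuous.add continuous_const
      apply Continuous.mul (by fun_prop)
      apply Continuous.pow
      apply Continuous.div continuous_const (by fun_prop)
      intro t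
      exact (Real.sqrt_pos.mpr (hpos t)).ne'
    rw [intervalIntegral.integral_eq_sub_of_hasDerivAt (fun t _ => hg t)
      (hcont.intervalIntegrable 0 (2*π))]
    have hc : Real.cos (2*(2*π)) = 1 := by
      rw [show (2:ℝ)*(2*π) = 2*π + 2*π by ring, Real.cos_add_two_pi, Real.cos_two_pi]
    simp [hc, Real.cos_zero]
    ring
  · positivity
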